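/- arXiv:1409.2237 — 2 statements merged into one kernel-verified Lean document; each statement's English description precedes it below -/
import Mathlib

section
/- For n ≥ 2, the ideal quantum correlator T : M_n(ℂ) → M_n(ℂ) ⊗ M_n(ℂ), defined by Tr[T(ρ)(A ⊗ B)] = Tr[A ρ B] for all A, B, is not Hermiticity-preserving: there exists a Hermitian matrix ρ such that T(ρ) is not Hermitian. -/
open Matrix Kronecker
open scoped ComplexOrder

noncomputable section

/-- The map `id_k ⊗ L` acting blockwise. -/
def tensorId {n m : ℕ} (L : Matrix (Fin n) (Fin n) ℂ → Matrix (Fin m) (Fin m) ℂ)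
    (k : ℕ) (X : Matrix (Fin k × Fin n) (Fin k × Fin n) ℂ) :
    Matrix (Fin k × Fin m) (Fin k × Fin m) ℂ :=
  Matrix.of fun p q => L (Matrix.of fun a b => X (p.1, a) (q.1, b)) p.2 q.2

/-- Complete positivity. -/
def IsCP {n m : ℕ} (L : Matrix (Fin n) (Fin n) ℂ → Matrix (Fin m) (Fin m) ℂ) : Prop :=
  ∀ (k : ℕ) (X : Matrix (Fin k × Fin n) (Fin k × Fin n) ℂ),
    X.PosSemidef → (tensorId L k X).PosSemidef

/-- Hermiticity preservation. -/
def IsHP {n m : ℕ} (L : Matrix (Fin n) (Fin n) ℂ → Matrix (Fin m) (Fin m) ℂ) : Prop :=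
  ∀ X, L Xᴴ = (L X)ᴴ

/-- Partial trace over the second tensor factor. -/
def ptrace2 {m d : ℕ} (X : Matrix (Fin m × Fin d) (Fin m × Fin d) ℂ) :
    Matrix (Fin m) (Fin m) ℂ :=
  Matrix.of fun i j => ∑ a, X (i, a) (j, a)

theorem stmt6 {n : ℕ} (hn : 2 ≤ n) :
    ∃ ρ : Matrix (Fin n) (Fin n) ℂ, ρ.IsHermitian ∧
      ¬ (∑ i : Fin n, ∑ j : Fin n,
          (Matrix.single i j 1 * ρ) ⊗ₖ Matrix.single j i 1).IsHermitian := by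
  have h0 : (0:ℕ) < n := by omega
  have h1 : (1:ℕ) < n := by omega
  set z : Fin n := ⟨0, h0⟩
  set o : Fin n := ⟨1, h1⟩
  have hzo : z ≠ o := by simp [z, o, Fin.ext_iff]
  refine ⟨Matrix.single z z 1, ?_, ?_⟩
  · ext a b
    simp [Matrix.single, Matrix.conjTranspose_apply, apply_ite, and_comm]
  · intro hH
    have := congrFun (congrFun hH.symm (o, z)) (z, o)
    rw [Matrix.conjTranspose_apply] at this
    simp only [Matrix.sum_apply, Matrix.kroneckerMap_apply, Matrix.mul_apply,
      Matrix.single, Matrix.of_apply, ite_mul, mul_ite, one_mul, mul_one,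
      zero_mul, mul_zero, Finset.sum_ite_eq, Finset.mem_univ, if_true] at this
    simp [ite_and, Finset.sum_ite_eq] at this
    simp [hzo] at this
end
end

section
/- For Hermitian A, B ∈ M_n(ℂ) and a density matrix ρ, the correlation function Tr[A ρ B] is real for all density matrices ρ if and only if A and B commute. -/
open Matrix Kronecker
open scoped ComplexOrder InnerProductSpace

noncomputable section

private lemma trace_quad {n : ℕ} (A B : Matrix (Fin n) (Fin n) ℂ) (x : Fin n → ℂ) :
    (A * Matrix.vecMulVec x (star x) * B).trace = star x ⬝ᵥ ((B * A) *ᵥ x) := by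
  simp only [Matrix.trace, Matrix.diag, Matrix.mul_apply, Matrix.mulVec, dotProduct,
    Matrix.vecMulVec_apply, Pi.star_apply, Finset.mul_sum, Finset.sum_mul]
  rw [Finset.sum_comm]
  apply Finset.sum_congr rfl; intro j _
  rw [Finset.sum_comm]
  apply Finset.sum_congr rfl; intro i _
  apply Finset.sum_congr rfl; intro k _
  ring

private lemma psd_outer {n : ℕ} (x : Fin n → ℂ) : (Matrix.vecMulVec x (star x)).PosSemidef := by
  rw [Matrix.posSemidef_iff_dotProduct_mulVec]
  constructor
  · ext i j; simp [Matrix.vecMulVec_apply, mul_comm]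
  · intro y
    have : star y ⬝ᵥ (Matrix.vecMulVec x (star x) *ᵥ y) = (star y ⬝ᵥ x) * star (star y ⬝ᵥ x) := by
      simp [Matrix.mulVec, dotProduct, Matrix.vecMulVec_apply, Finset.mul_sum,
        Finset.sum_mul, star_sum, mul_comm, mul_left_comm]
      rw [Finset.sum_comm]
    rw [this]
    exact mul_star_self_nonneg _

private lemma star_quad {n : ℕ} (M : Matrix (Fin n) (Fin n) ℂ) (y : Fin n → ℂ) :
    star (star y ⬝ᵥ (M *ᵥ y)) = star y ⬝ᵥ (Mᴴ *ᵥ y) := by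
  simp only [dotProduct, Matrix.mulVec, Matrix.conjTranspose_apply, Pi.star_apply,
    star_sum, star_mul', star_star, Finset.mul_sum]
  rw [Finset.sum_comm]
  apply Finset.sum_congr rfl; intro j _
  apply Finset.sum_congr rfl; intro i _
  ring

theorem stmt8 {n : ℕ} (A B : Matrix (Fin n) (Fin n) ℂ)
    (hA : A.IsHermitian) (hB : B.IsHermitian) :
    (∀ ρ : Matrix (Fin n) (Fin n) ℂ, ρ.PosSemidef → ρ.trace = 1 →
      ((A * ρ * B).trace.im = 0)) ↔ A * B = B * A := by
  constructor
  · intro h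
    set C : Matrix (Fin n) (Fin n) ℂ := B * A - A * B with hC
    have key : ∀ x : Fin n → ℂ, star x ⬝ᵥ (C *ᵥ x) = 0 := by
      intro x
      by_cases hx : x = 0
      · simp [hx]
      · set s : ℝ := ∑ i, Complex.normSq (x i) with hs
        have hspos : 0 < s := by
          obtain ⟨i, hi⟩ := Function.ne_iff.mp hx
          refine Finset.sum_pos' (fun j _ => Complex.normSq_nonneg _) ⟨i, Finset.mem_univ i, ?_⟩
          simpa [Complex.normSq_pos] using hi
        set c : ℝ := (Real.sqrt s)⁻¹ with hc
        have hcpos : 0 < c := by positivity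
        set u : Fin n → ℂ := (c : ℂ) • x with hu
        have htr : (Matrix.vecMulVec u (star u)).trace = 1 := by
          have : (Matrix.vecMulVec u (star u)).trace = ((∑ i, Complex.normSq (u i) : ℝ) : ℂ) := by
            simp [Matrix.trace, Matrix.diag, Matrix.vecMulVec_apply, Complex.mul_conj]
          rw [this]
          have : ∑ i, Complex.normSq (u i) = c ^ 2 * s := by
            simp [hu, Complex.normSq_mul, Finset.mul_sum, hs, sq]
          rw [this, hc]
          rw [← Real.sqrt_inv, Real.sq_sqrt (by positivity)]
          field_simp
          simp
        have him := h _ (psd_outer u) htr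
        rw [trace_quad] at him
        have hre : star (star u ⬝ᵥ ((B * A) *ᵥ u)) = star u ⬝ᵥ ((B * A) *ᵥ u) :=
          Complex.conj_eq_iff_im.mpr him
        rw [star_quad, Matrix.conjTranspose_mul, hA.eq, hB.eq] at hre
        have hu0 : star u ⬝ᵥ (C *ᵥ u) = 0 := by
          rw [hC, Matrix.sub_mulVec, dotProduct_sub, hre, sub_self]
        have hscale : star u ⬝ᵥ (C *ᵥ u) = ((c : ℂ) * (c : ℂ)) * (star x ⬝ᵥ (C *ᵥ x)) := by
          rw [hu, Matrix.mulVec_smul, star_smul, smul_dotProduct,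
            dotProduct_smul]
          simp [smul_smul, Complex.conj_ofReal, mul_comm]
          ring
        rw [hscale] at hu0
        have hcne : ((c : ℂ) * (c : ℂ)) ≠ 0 := by
          simp [Complex.ofReal_ne_zero, ne_of_gt hcpos]
        exact (mul_eq_zero.mp hu0).resolve_left hcne
    have hT : ∀ v : EuclideanSpace ℂ (Fin n), ⟪(Matrix.toEuclideanLin C) v, v⟫_ℂ = 0 := by
      intro v
      have hk := congrArg star (key ((WithLp.equiv 2 (Fin n → ℂ)) v))
      simp only [dotProduct, star_sum, star_mul', star_star, Pi.star_apply,
        star_zero] at hk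
      simpa [PiLp.inner_apply, RCLike.inner_apply, Matrix.toEuclideanLin_apply,
        dotProduct, mul_comm] using hk
    have hC0 : C = 0 := by
      have := (inner_map_self_eq_zero (Matrix.toEuclideanLin C)).mp hT
      exact (LinearEquiv.map_eq_zero_iff Matrix.toEuclideanLin).mp this
    have : B * A - A * B = 0 := hC0
    exact (sub_eq_zero.mp this).symm
  · intro hAB ρ hρ htr
    have e2 : (A * ρ * B).trace = (B * A * ρ).trace := by
      rw [Matrix.trace_mul_comm, ← mul_assoc]
    have hconj : star ((A * ρ * B).trace) = (A * ρ * B).trace := by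
      rw [← Matrix.trace_conjTranspose, Matrix.conjTranspose_mul, Matrix.conjTranspose_mul,
        hA.eq, hB.eq, hρ.1.eq]
      rw [e2, Matrix.trace_mul_comm, mul_assoc, Matrix.trace_mul_comm, hAB]
    exact Complex.conj_eq_iff_im.mp hconj
end
end
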